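/- arXiv:1110.3850 — 7 statements merged into one kernel-verified Lean document; each statement's English description precedes it below -/
import Mathlib

section
/- Let n ∈ ℕ, j ∈ {1,…,n}, let σ ∈ {−1,1}, let x_j, ε_a, ε_b ∈ ℝ and K ≥ 0 be real numbers satisfying |ε_a| ≤ K, |ε_b| ≤ 2nK, and |x_j| > (8n+1)K. Then σ·x_j + ε_a ≠ 0 and |(σ·(n+j)·x_j + ε_b)/(σ·x_j + ε_a) − (n+j)| < 1/2. In particular, the nearest integer to (σ(n+j)x_j + ε_b)/(σx_j + ε_a) − n is j. -/
/-- Deterministic core of the two-measurement 1-sparse recovery estimator. -/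
theorem stmt0 (n j : ℕ) (hj1 : 1 ≤ j) (hjn : j ≤ n)
    (σ xj εa εb K : ℝ) (hσ : σ = 1 ∨ σ = -1) (hK : 0 ≤ K)
    (ha : |εa| ≤ K) (hb : |εb| ≤ 2 * n * K)
    (hx : |xj| > (8 * n + 1) * K) :
    σ * xj + εa ≠ 0 ∧
    |(σ * ((n : ℝ) + j) * xj + εb) / (σ * xj + εa) - ((n : ℝ) + j)| < 1 / 2 ∧
    round ((σ * ((n : ℝ) + j) * xj + εb) / (σ * xj + εa) - (n : ℝ)) = (j : ℤ) := by
  have hn1 : (1 : ℝ) ≤ n := by exact_mod_cast hj1.trans hjn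
  have hjr : (j : ℝ) ≤ n := by exact_mod_cast hjn
  have hσa : |σ| = 1 := by rcases hσ with h | h <;> simp [h]
  set a : ℝ := σ * xj + εa with haa
  have habs : |xj| - K ≤ |a| := by
    have : |σ * xj| - |εa| ≤ |σ * xj + εa| := by
      have h1 := abs_add_le (σ * xj + εa) (-εa)
      simp at h1
      linarith [abs_mul σ xj]
    rw [abs_mul, hσa, one_mul] at this
    linarith
  have hxK : (8 * n + 1) * K ≥ K := by nlinarith
  have ha0 : 0 < |a| := by linarith
  have hane : a ≠ 0 := fun h => by simp [h] at ha0
  have hagt : 8 * n * K < |a| := by nlinarith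
  have key : (σ * ((n : ℝ) + j) * xj + εb) / a - ((n : ℝ) + j)
      = (εb - ((n : ℝ) + j) * εa) / a := by
    field_simp
    ring
  have hnum : |εb - ((n : ℝ) + j) * εa| ≤ 4 * n * K := by
    have h1 : |((n : ℝ) + j) * εa| ≤ 2 * n * K := by
      rw [abs_mul]
      have : |(n : ℝ) + j| = (n : ℝ) + j := abs_of_nonneg (by positivity)
      rw [this]
      nlinarith [abs_nonneg εa]
    calc |εb - ((n : ℝ) + j) * εa| ≤ |εb| + |((n : ℝ) + j) * εa| := abs_sub _ _
      _ ≤ 4 * n * K := by linarith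
  have hhalf : |(σ * ((n : ℝ) + j) * xj + εb) / a - ((n : ℝ) + j)| < 1 / 2 := by
    rw [key, abs_div]
    rw [div_lt_iff₀ ha0]
    nlinarith
  refine ⟨hane, hhalf, ?_⟩
  have hre : (σ * ((n : ℝ) + j) * xj + εb) / a - (n : ℝ)
      = ((σ * ((n : ℝ) + j) * xj + εb) / a - ((n : ℝ) + j)) + j := by ring
  rw [hre, round_eq, Int.floor_eq_iff]
  constructor
  · push_cast
    have := abs_lt.mp hhalf
    linarith [this.1]
  · push_cast
    have := abs_lt.mp hhalf
    linarith [this.2]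
end

section
/- Let (Ω, P) be a probability space and s₁,…,sₙ : Ω → ℝ be random variables, each uniformly distributed on {−1,1}, and pairwise independent. Let δ ∈ (0,1), x ∈ ℝⁿ and j ∈ {1,…,n}, and suppose |x_j| > (8n+1)·√(1/δ)·‖x restricted to {1,…,n}∖{j}‖₂. Define the random variables a = Σ_{i=1}^n sᵢ xᵢ and b = Σ_{i=1}^n (n+i) sᵢ xᵢ. Then with probability at least 1 − 2δ, a ≠ 0 and |b/a − (n+j)| < 1/2 (so that the nearest integer to b/a − n equals j). -/
open MeasureTheory ProbabilityTheory

section Aux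
variable {Ω : Type*} [MeasurableSpace Ω] (P : Measure Ω) [IsProbabilityMeasure P]

lemma my_round_eq (y : ℝ) (m : ℤ) (h : |y - m| < 1/2) : round y = m := by
  rw [round_eq, Int.floor_eq_iff]
  rw [abs_lt] at h
  constructor <;> · push_cast; linarith

lemma sign_ae (s : Ω → ℝ) (hm : Measurable s)
    (h1 : P {ω | s ω = 1} = 1/2) (h2 : P {ω | s ω = -1} = 1/2) :
    ∀ᵐ ω ∂P, s ω = 1 ∨ s ω = -1 := by
  have hA : MeasurableSet {ω | s ω = 1} := hm (measurableSet_singleton 1)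
  have hB : MeasurableSet {ω | s ω = -1} := hm (measurableSet_singleton (-1))
  have hd : Disjoint {ω | s ω = 1} {ω | s ω = -1} := by
    rw [Set.disjoint_left]; intro ω h1 h2; simp at h1 h2; rw [h1] at h2; norm_num at h2
  have : P ({ω | s ω = 1} ∪ {ω | s ω = -1}) = 1 := by
    rw [measure_union hd hB, h1, h2]
    rw [one_div, ENNReal.inv_two_add_inv_two]
  have := (prob_compl_eq_zero_iff (hA.union hB)).2 this
  rw [ae_iff]
  have hset : {a | ¬(s a = 1 ∨ s a = -1)} = ({ω | s ω = 1} ∪ {ω | s ω = -1})ᶜ := by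
    ext ω; simp [not_or]
  rw [hset]; exact this

lemma integrable_bdd (f : Ω → ℝ) (hm : Measurable f) (C : ℝ) (hC : ∀ᵐ ω ∂P, |f ω| ≤ C) :
    Integrable f P :=
  ⟨hm.aestronglyMeasurable, HasFiniteIntegral.of_bounded hC⟩

lemma exp_zero (s : Ω → ℝ) (hm : Measurable s)
    (h1 : P {ω | s ω = 1} = 1/2) (h2 : P {ω | s ω = -1} = 1/2) :
    ∫ ω, s ω ∂P = 0 := by
  have hA : MeasurableSet {ω | s ω = 1} := hm (measurableSet_singleton 1)
  have hB : MeasurableSet {ω | s ω = -1} := hm (measurableSet_singleton (-1))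
  have hae := sign_ae P s hm h1 h2
  have heq : s =ᵐ[P] fun ω => Set.indicator {ω | s ω = 1} (fun _ => (1:ℝ)) ω
      - Set.indicator {ω | s ω = -1} (fun _ => (1:ℝ)) ω := by
    filter_upwards [hae] with ω hω
    rcases hω with h | h <;>
      simp [Set.indicator_apply, Set.mem_setOf_eq, h] <;> norm_num
  rw [integral_congr_ae heq, integral_sub ((integrable_const (1:ℝ)).indicator hA)
    ((integrable_const (1:ℝ)).indicator hB)]
  rw [integral_indicator_const _ hA, integral_indicator_const _ hB, measureReal_def, measureReal_def, h1, h2]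
  ring

lemma exp_sq (s : Ω → ℝ) (hm : Measurable s)
    (h1 : P {ω | s ω = 1} = 1/2) (h2 : P {ω | s ω = -1} = 1/2) :
    ∫ ω, s ω ^ 2 ∂P = 1 := by
  have hae := sign_ae P s hm h1 h2
  have heq : (fun ω => s ω ^ 2) =ᵐ[P] fun _ => (1:ℝ) := by
    filter_upwards [hae] with ω hω
    rcases hω with h | h <;> rw [h] <;> norm_num
  rw [integral_congr_ae heq]; simp

lemma second_moment (n : ℕ) (s : Fin n → Ω → ℝ)
    (hmeas : ∀ i, Measurable (s i))
    (hunif : ∀ i, P {ω | s i ω = 1} = 1 / 2 ∧ P {ω | s i ω = -1} = 1 / 2)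
    (hindep : ∀ i j, i ≠ j → IndepFun (s i) (s j) P)
    (c : Fin n → ℝ) :
    ∫ ω, (∑ i, c i * s i ω)^2 ∂P = ∑ i, c i ^ 2 := by
  have habs : ∀ i, ∀ᵐ ω ∂P, |s i ω| ≤ 1 := by
    intro i
    filter_upwards [sign_ae P (s i) (hmeas i) (hunif i).1 (hunif i).2] with ω hω
    rcases hω with h | h <;> rw [h] <;> norm_num
  have hsint : ∀ i, Integrable (s i) P := fun i => integrable_bdd P _ (hmeas i) 1 (habs i)
  have hint : ∀ i k : Fin n, Integrable (fun ω => (c i * s i ω) * (c k * s k ω)) P := by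
    intro i k
    refine integrable_bdd P _ (((hmeas i).const_mul _).mul ((hmeas k).const_mul _))
      (|c i| * |c k|) ?_
    filter_upwards [habs i, habs k] with ω h1 h2
    have e : |(c i * s i ω) * (c k * s k ω)| = (|c i| * |c k|) * (|s i ω| * |s k ω|) := by
      rw [abs_mul, abs_mul, abs_mul]; ring
    rw [e]
    have h3 : |s i ω| * |s k ω| ≤ 1 := by
      nlinarith [abs_nonneg (s i ω), abs_nonneg (s k ω)]
    have h4 : 0 ≤ |c i| * |c k| := mul_nonneg (abs_nonneg _) (abs_nonneg _)
    nlinarith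
  have hsq : ∀ ω, (∑ i, c i * s i ω)^2 = ∑ i, ∑ k, (c i * s i ω) * (c k * s k ω) := by
    intro ω; rw [sq, Finset.sum_mul_sum]
  simp_rw [hsq]
  rw [integral_finset_sum _ (fun i _ => integrable_finset_sum _ (fun k _ => hint i k))]
  refine Finset.sum_congr rfl fun i _ => ?_
  rw [integral_finset_sum _ (fun k _ => hint i k)]
  rw [Finset.sum_eq_single i]
  · have : ∀ ω, (c i * s i ω) * (c i * s i ω) = (c i ^ 2) * (s i ω ^ 2) := by intro ω; ring
    simp_rw [this]
    rw [integral_const_mul, exp_sq P (s i) (hmeas i) (hunif i).1 (hunif i).2, mul_one]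
  · intro k _ hk
    have : ∀ ω, (c i * s i ω) * (c k * s k ω) = (c i * c k) * (s i ω * s k ω) := by
      intro ω; ring
    simp_rw [this]
    rw [integral_const_mul]
    have := (hindep i k (fun h => hk (h ▸ rfl))).integral_mul_eq_mul_integral (hsint i).aestronglyMeasurable (hsint k).aestronglyMeasurable
    simp only [Pi.mul_apply] at this
    rw [show (fun a => s i a * s k a) = (s i * s k) from rfl, (show integral P (s i * s k) = (∫ x, s i x ∂P) * ∫ x, s k x ∂P from this), exp_zero P (s i) (hmeas i) (hunif i).1 (hunif i).2, zero_mul, mul_zero]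
  · intro h; exact absurd (Finset.mem_univ i) h

lemma cheb (Y : Ω → ℝ) (hm : Measurable Y) (V c : ℝ) (hc : 0 < c)
    (hV : ∫ ω, Y ω ^ 2 ∂P = V) (hint : Integrable (fun ω => Y ω ^ 2) P) :
    P {ω | c ≤ |Y ω|} ≤ ENNReal.ofReal (V / c ^ 2) := by
  have hlint : ∫⁻ ω, ENNReal.ofReal (Y ω ^ 2) ∂P = ENNReal.ofReal V := by
    rw [← ofReal_integral_eq_lintegral_ofReal hint (ae_of_all _ fun ω => sq_nonneg _), hV]
  have key := mul_meas_ge_le_lintegral₀ (μ := P)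
    (ENNReal.measurable_ofReal.comp (hm.pow_const 2)).aemeasurable (ENNReal.ofReal (c ^ 2))
  simp only [Function.comp] at key
  rw [hlint] at key
  have hsub : {ω | c ≤ |Y ω|} ⊆ {ω | ENNReal.ofReal (c ^ 2) ≤ ENNReal.ofReal (Y ω ^ 2)} := by
    intro ω hω
    simp only [Set.mem_setOf_eq] at hω ⊢
    apply ENNReal.ofReal_le_ofReal
    calc c ^ 2 ≤ |Y ω| ^ 2 := by nlinarith [abs_nonneg (Y ω)]
      _ = Y ω ^ 2 := sq_abs _
  have h1 : ENNReal.ofReal (c ^ 2) * P {ω | c ≤ |Y ω|} ≤ ENNReal.ofReal V :=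
    le_trans (mul_le_mul_right (measure_mono hsub) _) key
  have hc2 : ENNReal.ofReal (c ^ 2) ≠ 0 := by
    simp [ENNReal.ofReal_eq_zero]; positivity
  rw [ENNReal.ofReal_div_of_pos (by positivity)]
  rw [ENNReal.le_div_iff_mul_le (Or.inl hc2) (Or.inl ENNReal.ofReal_ne_top)]
  rwa [mul_comm]

end Aux

set_option maxHeartbeats 2000000 in
/-- Non-adaptive recovery of an Ω(n)-heavy coordinate from two measurements:
with probability at least 1 - 2δ, the nearest integer to b/a - n equals j. -/
theorem stmt2 {Ω : Type*} [MeasurableSpace Ω] (P : Measure Ω) [IsProbabilityMeasure P]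
    (n : ℕ) (s : Fin n → Ω → ℝ)
    (hmeas : ∀ i, Measurable (s i))
    (hunif : ∀ i, P {ω | s i ω = 1} = 1 / 2 ∧ P {ω | s i ω = -1} = 1 / 2)
    (hindep : ∀ i j, i ≠ j → IndepFun (s i) (s j) P)
    (δ : ℝ) (hδ0 : 0 < δ) (hδ1 : δ < 1)
    (x : Fin n → ℝ) (j : Fin n)
    (hheavy : |x j| > (8 * (n : ℝ) + 1) * Real.sqrt (1 / δ) *
      Real.sqrt (∑ i ∈ Finset.univ.erase j, x i ^ 2)) :
    1 - ENNReal.ofReal (2 * δ) ≤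
      P {ω | (∑ i, s i ω * x i) ≠ 0 ∧
        |(∑ i, ((n : ℝ) + (i.val : ℝ) + 1) * s i ω * x i) / (∑ i, s i ω * x i) -
          ((n : ℝ) + (j.val : ℝ) + 1)| < 1 / 2 ∧
        round ((∑ i, ((n : ℝ) + (i.val : ℝ) + 1) * s i ω * x i) / (∑ i, s i ω * x i) -
          (n : ℝ)) = (j.val : ℤ) + 1} := by
  have hn : 0 < n := j.pos
  set σ2 : ℝ := ∑ i ∈ Finset.univ.erase j, x i ^ 2 with hσ2def
  have hσ2nn : 0 ≤ σ2 := Finset.sum_nonneg fun i _ => sq_nonneg _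
  set σ : ℝ := Real.sqrt σ2 with hσdef
  set K : ℝ := Real.sqrt (1 / δ) with hKdef
  have hσnn : 0 ≤ σ := Real.sqrt_nonneg _
  have hσsq : σ ^ 2 = σ2 := Real.sq_sqrt hσ2nn
  have hK0 : 0 < K := Real.sqrt_pos.2 (by positivity)
  have hKsq : K ^ 2 = 1 / δ := Real.sq_sqrt (by positivity)
  set c1 : Fin n → ℝ := fun i => if i = j then 0 else x i with hc1
  set c2 : Fin n → ℝ := fun i => if i = j then 0 else ((n : ℝ) + i.val + 1) * x i with hc2
  set r : Ω → ℝ := fun ω => ∑ i, c1 i * s i ω with hrdef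
  set t : Ω → ℝ := fun ω => ∑ i, c2 i * s i ω with htdef
  have hrm : Measurable r := Finset.measurable_sum _ fun i _ => (hmeas i).const_mul _
  have htm : Measurable t := Finset.measurable_sum _ fun i _ => (hmeas i).const_mul _
  have habs : ∀ i, ∀ᵐ ω ∂P, |s i ω| ≤ 1 := by
    intro i
    filter_upwards [sign_ae P (s i) (hmeas i) (hunif i).1 (hunif i).2] with ω hω
    rcases hω with h | h <;> rw [h] <;> norm_num
  -- integrability of r^2 and t^2
  have hint_sq : ∀ c : Fin n → ℝ, Integrable (fun ω => (∑ i, c i * s i ω) ^ 2) P := by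
    intro c
    refine integrable_bdd P _ ((Finset.measurable_sum _ fun i _ =>
      (hmeas i).const_mul _).pow_const 2) ((∑ i, |c i|) ^ 2) ?_
    have : ∀ᵐ ω ∂P, ∀ i : Fin n, |s i ω| ≤ 1 := ae_all_iff.2 habs
    filter_upwards [this] with ω hω
    have hb : |∑ i, c i * s i ω| ≤ ∑ i, |c i| := by
      refine le_trans (Finset.abs_sum_le_sum_abs _ _) (Finset.sum_le_sum fun i _ => ?_)
      rw [abs_mul]
      nlinarith [abs_nonneg (c i), hω i, abs_nonneg (s i ω)]
    calc |(∑ i, c i * s i ω) ^ 2| = |∑ i, c i * s i ω| ^ 2 := abs_pow _ _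
      _ ≤ (∑ i, |c i|) ^ 2 := pow_le_pow_left₀ (abs_nonneg _) hb 2
  -- second moments
  have hV1 : ∫ ω, r ω ^ 2 ∂P = σ2 := by
    rw [hrdef]
    rw [second_moment P n s hmeas hunif hindep c1]
    rw [hσ2def, ← Finset.sum_erase (f := fun i => c1 i ^ 2) Finset.univ
      (by simp [hc1] : c1 j ^ 2 = 0)]
    refine Finset.sum_congr rfl fun i hi => ?_
    rw [hc1]; simp [Finset.ne_of_mem_erase hi]
  have hV2 : ∫ ω, t ω ^ 2 ∂P = ∑ i, c2 i ^ 2 := by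
    rw [htdef]; exact second_moment P n s hmeas hunif hindep c2
  have hV2bd : ∑ i, c2 i ^ 2 ≤ 4 * (n : ℝ) ^ 2 * σ2 := by
    rw [hσ2def, Finset.mul_sum, ← Finset.sum_erase (f := fun i => c2 i ^ 2) Finset.univ
      (by simp [hc2] : c2 j ^ 2 = 0)]
    refine Finset.sum_le_sum fun i hi => ?_
    rw [hc2]; simp only [Finset.ne_of_mem_erase hi, if_false]
    have h1 : ((i.val : ℝ)) + 1 ≤ n := by
      have := i.isLt; exact_mod_cast Nat.succ_le_of_lt this
    have h2 : (0:ℝ) ≤ (n : ℝ) + i.val + 1 := by positivity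
    have h3 : ((n : ℝ) + i.val + 1) ≤ 2 * n := by linarith
    calc (((n : ℝ) + i.val + 1) * x i) ^ 2 = ((n : ℝ) + i.val + 1) ^ 2 * x i ^ 2 := by ring
      _ ≤ (2 * n) ^ 2 * x i ^ 2 := by
          have h4 : ((n : ℝ) + i.val + 1) ^ 2 ≤ (2 * (n:ℝ)) ^ 2 := by nlinarith
          exact mul_le_mul_of_nonneg_right h4 (sq_nonneg _)
      _ = 4 * (n : ℝ) ^ 2 * x i ^ 2 := by ring
  -- bad events
  set B1 : Set Ω := {ω | K * σ < |r ω|} with hB1def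
  set B2 : Set Ω := {ω | 2 * (n : ℝ) * K * σ < |t ω|} with hB2def
  set N : Set Ω := {ω | ¬ (s j ω = 1 ∨ s j ω = -1)} with hNdef
  have hB1m : MeasurableSet B1 := measurableSet_lt measurable_const hrm.abs
  have hB2m : MeasurableSet B2 := measurableSet_lt measurable_const htm.abs
  have hNm : MeasurableSet N := by
    have hA : MeasurableSet {ω | s j ω = 1} := (hmeas j) (measurableSet_singleton 1)
    have hB : MeasurableSet {ω | s j ω = -1} := (hmeas j) (measurableSet_singleton (-1))
    have : N = ({ω | s j ω = 1} ∪ {ω | s j ω = -1})ᶜ := by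
      ext ω; simp [hNdef, not_or]
    rw [this]; exact (hA.union hB).compl
  have hPN : P N = 0 := by
    have := sign_ae P (s j) (hmeas j) (hunif j).1 (hunif j).2
    rw [ae_iff] at this; exact this
  have hPB1 : P B1 ≤ ENNReal.ofReal δ := by
    rcases eq_or_lt_of_le hσ2nn with hz | hpos
    · have hr0 : ∀ ω, r ω = 0 := by
        intro ω
        rw [hrdef]
        refine Finset.sum_eq_zero fun i _ => ?_
        rcases eq_or_ne i j with h | h
        · simp [hc1, h]
        · have hx : x i ^ 2 = 0 := by
            have := (Finset.sum_eq_zero_iff_of_nonneg (fun i _ => sq_nonneg (x i))).1 hz.symm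
            exact this i (Finset.mem_erase.2 ⟨h, Finset.mem_univ i⟩)
          have : x i = 0 := by nlinarith [sq_nonneg (x i)]
          simp [hc1, h, this]
      have hσ0 : σ = 0 := by rw [hσdef, ← hz, Real.sqrt_zero]
      have : B1 = ∅ := by
        ext ω; simp [hB1def, hr0 ω, hσ0]
      rw [this]; simp
    · have hσpos : 0 < σ := Real.sqrt_pos.2 hpos
      have hcpos : 0 < K * σ := mul_pos hK0 hσpos
      have := cheb P r hrm σ2 (K * σ) hcpos hV1 (hint_sq c1)
      refine le_trans (measure_mono ?_) (le_trans this ?_)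
      · intro ω hω; exact le_of_lt (show K * σ < |r ω| from hω)
      · apply ENNReal.ofReal_le_ofReal
        rw [mul_pow, hKsq, hσsq]
        rw [div_le_iff₀ (by positivity)]
        field_simp
        exact le_rfl
  have hPB2 : P B2 ≤ ENNReal.ofReal δ := by
    rcases eq_or_lt_of_le hσ2nn with hz | hpos
    · have ht0 : ∀ ω, t ω = 0 := by
        intro ω
        rw [htdef]
        refine Finset.sum_eq_zero fun i _ => ?_
        rcases eq_or_ne i j with h | h
        · simp [hc2, h]
        · have hx : x i ^ 2 = 0 := by
            have := (Finset.sum_eq_zero_iff_of_nonneg (fun i _ => sq_nonneg (x i))).1 hz.symm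
            exact this i (Finset.mem_erase.2 ⟨h, Finset.mem_univ i⟩)
          have : x i = 0 := by nlinarith [sq_nonneg (x i)]
          simp [hc2, h, this]
      have hσ0 : σ = 0 := by rw [hσdef, ← hz, Real.sqrt_zero]
      have : B2 = ∅ := by
        ext ω; simp [hB2def, ht0 ω, hσ0]
      rw [this]; simp
    · have hσpos : 0 < σ := Real.sqrt_pos.2 hpos
      have hnpos : (0:ℝ) < n := by exact_mod_cast hn
      have hcpos : 0 < 2 * (n : ℝ) * K * σ := by positivity
      have := cheb P t htm (∑ i, c2 i ^ 2) (2 * (n : ℝ) * K * σ) hcpos hV2 (hint_sq c2)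
      refine le_trans (measure_mono ?_) (le_trans this ?_)
      · intro ω hω; exact le_of_lt (show 2 * (n : ℝ) * K * σ < |t ω| from hω)
      · apply ENNReal.ofReal_le_ofReal
        rw [div_le_iff₀ (pow_pos hcpos 2)]
        have : (2 * (n : ℝ) * K * σ) ^ 2 = 4 * n ^ 2 * (1/δ) * σ2 := by
          rw [mul_pow, mul_pow, mul_pow, hKsq, hσsq]; ring
        rw [this]
        calc ∑ i, c2 i ^ 2 ≤ 4 * (n : ℝ) ^ 2 * σ2 := hV2bd
          _ = δ * (4 * n ^ 2 * (1/δ) * σ2) := by field_simp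
  -- combine
  set Bad : Set Ω := B1 ∪ B2 ∪ N with hBad
  have hBadm : MeasurableSet Bad := (hB1m.union hB2m).union hNm
  have hPBad : P Bad ≤ ENNReal.ofReal (2 * δ) := by
    calc P Bad ≤ P (B1 ∪ B2) + P N := measure_union_le _ _
      _ ≤ (P B1 + P B2) + 0 := by rw [hPN]; exact add_le_add_left (measure_union_le _ _) 0
      _ ≤ ENNReal.ofReal δ + ENNReal.ofReal δ + 0 := by
          exact add_le_add_left (add_le_add hPB1 hPB2) 0
      _ = ENNReal.ofReal (2 * δ) := by
          rw [add_zero, ← ENNReal.ofReal_add hδ0.le hδ0.le]; norm_num [two_mul]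
  -- pointwise inclusion
  have hsub : Badᶜ ⊆ {ω | (∑ i, s i ω * x i) ≠ 0 ∧
        |(∑ i, ((n : ℝ) + (i.val : ℝ) + 1) * s i ω * x i) / (∑ i, s i ω * x i) -
          ((n : ℝ) + (j.val : ℝ) + 1)| < 1 / 2 ∧
        round ((∑ i, ((n : ℝ) + (i.val : ℝ) + 1) * s i ω * x i) / (∑ i, s i ω * x i) -
          (n : ℝ)) = (j.val : ℤ) + 1} := by
    intro ω hω
    simp only [hBad, Set.compl_union, Set.mem_inter_iff, Set.mem_compl_iff,
      hB1def, hB2def, hNdef, Set.mem_setOf_eq, not_lt, not_not] at hω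
    obtain ⟨⟨hr_bd, ht_bd⟩, hsj⟩ := hω
    have hsjabs : |s j ω| = 1 := by rcases hsj with h | h <;> rw [h] <;> norm_num
    set A : ℝ := ∑ i, s i ω * x i with hA
    set B : ℝ := ∑ i, ((n : ℝ) + (i.val : ℝ) + 1) * s i ω * x i with hB
    have hr_eq : r ω = ∑ i ∈ Finset.univ.erase j, s i ω * x i := by
      show ∑ i, c1 i * s i ω = _
      rw [← Finset.sum_erase (f := fun i => c1 i * s i ω) Finset.univ
        (by simp [hc1] : c1 j * s j ω = 0)]
      refine Finset.sum_congr rfl fun i hi => ?_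
      simp [hc1, Finset.ne_of_mem_erase hi, mul_comm]
    have ht_eq : t ω = ∑ i ∈ Finset.univ.erase j,
        ((n : ℝ) + (i.val : ℝ) + 1) * s i ω * x i := by
      show ∑ i, c2 i * s i ω = _
      rw [← Finset.sum_erase (f := fun i => c2 i * s i ω) Finset.univ
        (by simp [hc2] : c2 j * s j ω = 0)]
      refine Finset.sum_congr rfl fun i hi => ?_
      simp only [hc2, Finset.ne_of_mem_erase hi, if_false]
      ring
    have hAdec : A = s j ω * x j + r ω := by
      rw [hA, hr_eq, ← Finset.add_sum_erase _ (fun i => s i ω * x i) (Finset.mem_univ j)]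
    have hBdec : B = ((n : ℝ) + (j.val : ℝ) + 1) * (s j ω * x j) + t ω := by
      rw [hB, ht_eq, ← Finset.add_sum_erase _
        (fun i => ((n : ℝ) + (i.val : ℝ) + 1) * s i ω * x i) (Finset.mem_univ j)]
      ring
    set u : ℝ := K * σ with hu
    have hu0 : 0 ≤ u := mul_nonneg hK0.le hσnn
    have hxj : |x j| > (8 * (n : ℝ) + 1) * u := by
      rw [hu, ← mul_assoc]; exact hheavy
    have hrabs0 : 0 ≤ |r ω| := abs_nonneg _
    -- |A| > 8 n u
    have hAlb : |x j| - u ≤ |A| := by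
      have he : s j ω * x j = A - r ω := by rw [hAdec]; ring
      have h3 : |s j ω * x j| ≤ |A| + |r ω| := by rw [he]; exact abs_sub _ _
      rw [abs_mul, hsjabs, one_mul] at h3
      linarith
    have hAgt : 8 * (n : ℝ) * u < |A| := by nlinarith
    have hnu : 0 ≤ (n : ℝ) * u := mul_nonneg (Nat.cast_nonneg n) hu0
    have hApos : 0 < |A| := by nlinarith
    have hAne : A ≠ 0 := by
      intro h; rw [h] at hApos; simp at hApos
    -- numerator bound
    have hjn : ((j.val : ℝ)) + 1 ≤ n := by
      have := j.isLt; exact_mod_cast Nat.succ_le_of_lt this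
    have hnum_eq : B - ((n : ℝ) + (j.val : ℝ) + 1) * A
        = t ω - ((n : ℝ) + (j.val : ℝ) + 1) * r ω := by
      rw [hAdec, hBdec]; ring
    have hnum_bd : |t ω - ((n : ℝ) + (j.val : ℝ) + 1) * r ω| ≤ 4 * (n : ℝ) * u := by
      have h1 : |t ω - ((n : ℝ) + (j.val : ℝ) + 1) * r ω|
          ≤ |t ω| + ((n : ℝ) + (j.val : ℝ) + 1) * |r ω| := by
        calc |t ω - ((n : ℝ) + (j.val : ℝ) + 1) * r ω|
            ≤ |t ω| + |((n : ℝ) + (j.val : ℝ) + 1) * r ω| := abs_sub _ _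
          _ = |t ω| + |((n : ℝ) + (j.val : ℝ) + 1)| * |r ω| := by rw [abs_mul]
          _ = |t ω| + ((n : ℝ) + (j.val : ℝ) + 1) * |r ω| := by
              have hge : (0:ℝ) ≤ (n : ℝ) + (j.val : ℝ) + 1 := by
                have h5 : (0:ℝ) ≤ (n : ℝ) := Nat.cast_nonneg n
                have h6 : (0:ℝ) ≤ (j.val : ℝ) := Nat.cast_nonneg j.val
                linarith
              rw [abs_of_nonneg hge]
      have h2 : ((n : ℝ) + (j.val : ℝ) + 1) * |r ω| ≤ 2 * (n : ℝ) * |r ω| := by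
        nlinarith
      have h3 : 2 * (n : ℝ) * |r ω| ≤ 2 * (n : ℝ) * u := by
        have : (0:ℝ) ≤ 2 * n := by positivity
        exact mul_le_mul_of_nonneg_left hr_bd this
      have h4 : |t ω| ≤ 2 * (n : ℝ) * u := by
        calc |t ω| ≤ 2 * (n : ℝ) * K * σ := ht_bd
          _ = 2 * (n : ℝ) * u := by rw [hu]; ring
      linarith
    -- distance bound
    have hmain : |B / A - ((n : ℝ) + (j.val : ℝ) + 1)| < 1 / 2 := by
      have heq : B / A - ((n : ℝ) + (j.val : ℝ) + 1)
          = (B - ((n : ℝ) + (j.val : ℝ) + 1) * A) / A := by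
        field_simp [hAne]
      rw [heq, abs_div, div_lt_iff₀ hApos, hnum_eq]
      calc |t ω - ((n : ℝ) + (j.val : ℝ) + 1) * r ω| ≤ 4 * (n : ℝ) * u := hnum_bd
        _ < 1 / 2 * |A| := by linarith
    refine ⟨hAne, hmain, ?_⟩
    refine my_round_eq _ _ ?_
    push_cast
    have e : B / A - (n : ℝ) - ((j.val : ℝ) + 1) = B / A - ((n : ℝ) + (j.val : ℝ) + 1) := by
      ring
    rw [e]
    exact hmain
  calc 1 - ENNReal.ofReal (2 * δ) ≤ 1 - P Bad := tsub_le_tsub_left hPBad 1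
    _ = P Badᶜ := (prob_compl_eq_one_sub hBadm).symm
    _ ≤ _ := measure_mono hsub
end

section
/- Let D ≥ 1 be an integer, δ ∈ (0,1], C ≥ 2, σ ∈ {−1,1}, and let Y ≥ 0, x_j ∈ ℝ with |x_j| ≥ C·(D/δ)·Y. Let u ∈ ℝ^D and p* ∈ {1,…,D} satisfy |u_{p*}| ≤ Y/√(Dδ) and ‖u‖₂ ≤ Y/√δ. Define v ∈ ℝ^D by v_{p*} = σ·x_j + u_{p*} and v_p = u_p for p ≠ p*. Then |v_{p*}| ≥ (C·D/(2√δ)) · ‖v restricted to {1,…,D}∖{p*}‖₂. -/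
/-- Deterministic signal-to-noise amplification step of the noise-shrinking lemma. -/
theorem stmt4 (D : ℕ) (hD : 1 ≤ D) (δ C σ Y xj : ℝ)
    (hδ0 : 0 < δ) (hδ1 : δ ≤ 1) (hC : 2 ≤ C) (hσ : σ = 1 ∨ σ = -1) (hY : 0 ≤ Y)
    (hxj : |xj| ≥ C * ((D : ℝ) / δ) * Y)
    (u : Fin D → ℝ) (pstar : Fin D)
    (hup : |u pstar| ≤ Y / Real.sqrt ((D : ℝ) * δ))
    (hu : Real.sqrt (∑ p, u p ^ 2) ≤ Y / Real.sqrt δ)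
    (v : Fin D → ℝ)
    (hv : v = fun p => if p = pstar then σ * xj + u pstar else u p) :
    |v pstar| ≥ (C * (D : ℝ) / (2 * Real.sqrt δ)) *
      Real.sqrt (∑ p ∈ Finset.univ.erase pstar, v p ^ 2) := by
  subst hv
  have hδs : (0:ℝ) < Real.sqrt δ := Real.sqrt_pos.2 hδ0
  have hδss : Real.sqrt δ * Real.sqrt δ = δ := Real.mul_self_sqrt hδ0.le
  have hD1 : (1:ℝ) ≤ D := by exact_mod_cast hD
  have hCD : (2:ℝ) ≤ C * D := by nlinarith
  -- noise bound
  have hsum : ∑ p ∈ Finset.univ.erase pstar,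
      (fun p => if p = pstar then σ * xj + u pstar else u p) p ^ 2
      = ∑ p ∈ Finset.univ.erase pstar, u p ^ 2 := by
    refine Finset.sum_congr rfl fun p hp => ?_
    simp [Finset.ne_of_mem_erase hp]
  have hN : Real.sqrt (∑ p ∈ Finset.univ.erase pstar, u p ^ 2) ≤ Y / Real.sqrt δ := by
    refine le_trans (Real.sqrt_le_sqrt ?_) hu
    exact Finset.sum_le_sum_of_subset_of_nonneg (Finset.erase_subset _ _)
      (fun i _ _ => sq_nonneg _)
  -- |u pstar| ≤ Y / δ
  have hDδ : δ ≤ Real.sqrt ((D:ℝ) * δ) := by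
    nlinarith [Real.sq_sqrt (by positivity : (0:ℝ) ≤ (D:ℝ) * δ),
      Real.sqrt_nonneg ((D:ℝ) * δ)]
  have hup' : |u pstar| ≤ Y / δ := by
    refine hup.trans ?_
    exact div_le_div_of_nonneg_left hY hδ0 hDδ
  -- signal bound
  have hσxj : |σ * xj| = |xj| := by
    rcases hσ with h | h <;> simp [h, abs_mul]
  have htri : |σ * xj| ≤ |σ * xj + u pstar| + |u pstar| := by
    have := abs_add_le (σ * xj + u pstar) (-(u pstar))
    simpa using this
  have hsig : |σ * xj + u pstar| ≥ C * D * Y / δ - Y / δ := by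
    have : |xj| ≥ C * D * Y / δ := by
      calc |xj| ≥ C * ((D:ℝ) / δ) * Y := hxj
        _ = C * D * Y / δ := by ring
    rw [hσxj] at htri
    linarith
  have hvp : (fun p => if p = pstar then σ * xj + u pstar else u p) pstar
      = σ * xj + u pstar := by simp
  rw [hvp, hsum]
  have hRHS : (C * (D:ℝ) / (2 * Real.sqrt δ)) *
      Real.sqrt (∑ p ∈ Finset.univ.erase pstar, u p ^ 2) ≤ C * D * Y / (2 * δ) := by
    have h1 : (0:ℝ) ≤ C * D / (2 * Real.sqrt δ) := by positivity
    calc (C * (D:ℝ) / (2 * Real.sqrt δ)) * Real.sqrt (∑ p ∈ Finset.univ.erase pstar, u p ^ 2)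
        ≤ (C * D / (2 * Real.sqrt δ)) * (Y / Real.sqrt δ) := by
          exact mul_le_mul_of_nonneg_left hN h1
      _ = C * D * Y / (2 * δ) := by
          rw [div_mul_div_comm,
            show 2 * Real.sqrt δ * Real.sqrt δ = 2 * δ by rw [mul_assoc, hδss]]
  have hfinal : C * D * Y / (2 * δ) ≤ C * D * Y / δ - Y / δ := by
    have heq : C * D * Y / δ - Y / δ - C * D * Y / (2 * δ)
        = (C * D - 2) * Y / (2 * δ) := by field_simp; ring
    have hnn : (0:ℝ) ≤ (C * D - 2) * Y / (2 * δ) :=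
      div_nonneg (mul_nonneg (by linarith) hY) (by positivity)
    linarith
  linarith
end

section
/- Let C′ > 0, and define B_i = 2^{(3/2)^i} and δ_i = 2^{−i}/4 for i ≥ 0. Let n ≥ 2, x ∈ ℝⁿ, j ∈ {1,…,n} with ‖x restricted to {1,…,n}∖{j}‖₂ ≤ |x_j|·δ₀²/(16·C′·B₀²). Let r ≥ 1 and suppose S₀ = {1,…,n} ⊇ S₁ ⊇ ⋯ ⊇ S_r are sets such that for every i < r: j ∈ S_{i+1}, ‖x restricted to S_{i+1}∖{j}‖₂ ≤ ‖x restricted to S_i∖{j}‖₂/(4B_i), and |S_{i+1}| ≤ 1 + |S_i|/(16B_i²). Then: (a) for every i ≤ r, ‖x restricted to S_i∖{j}‖₂ ≤ |x_j|·δ_i²/(16·C′·B_i²); and (b) if B_r ≥ n, then S_r = {j}. -/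
/-- The deterministic induction underlying the O(log log n)-round adaptive
1-sparse recovery lemma. -/
theorem stmt6 (C' : ℝ) (hC' : 0 < C') (n : ℕ) (hn : 2 ≤ n) (x : Fin n → ℝ) (j : Fin n)
    (B δ : ℕ → ℝ)
    (hB : ∀ i, B i = (2 : ℝ) ^ ((3 / 2 : ℝ) ^ i))
    (hδ : ∀ i, δ i = 1 / (4 * 2 ^ i))
    (r : ℕ) (hr : 1 ≤ r)
    (S : ℕ → Finset (Fin n)) (hS0 : S 0 = Finset.univ)
    (hchain : ∀ i < r, S (i + 1) ⊆ S i)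
    (hbase : Real.sqrt (∑ m ∈ Finset.univ.erase j, x m ^ 2) ≤
      |x j| * (δ 0) ^ 2 / (16 * C' * (B 0) ^ 2))
    (hstep : ∀ i < r, j ∈ S (i + 1) ∧
      Real.sqrt (∑ m ∈ (S (i + 1)).erase j, x m ^ 2) ≤
        Real.sqrt (∑ m ∈ (S i).erase j, x m ^ 2) / (4 * B i) ∧
      ((S (i + 1)).card : ℝ) ≤ 1 + ((S i).card : ℝ) / (16 * (B i) ^ 2)) :
    (∀ i ≤ r, Real.sqrt (∑ m ∈ (S i).erase j, x m ^ 2) ≤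
      |x j| * (δ i) ^ 2 / (16 * C' * (B i) ^ 2)) ∧
    ((n : ℝ) ≤ B r → S r = {j}) := by
  have hBpos : ∀ i, 0 < B i := fun i => by rw [hB]; positivity
  have hBsq : ∀ i, B (i + 1) ^ 2 = B i ^ 3 := by
    intro i
    rw [hB, hB]
    rw [← Real.rpow_natCast ((2:ℝ) ^ ((3/2:ℝ) ^ (i+1))) 2,
        ← Real.rpow_natCast ((2:ℝ) ^ ((3/2:ℝ) ^ i)) 3,
        ← Real.rpow_mul (by norm_num), ← Real.rpow_mul (by norm_num)]
    congr 1
    push_cast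
    ring
  have hδsq : ∀ i, δ (i + 1) ^ 2 = δ i ^ 2 / 4 := by
    intro i
    rw [hδ, hδ, pow_succ]
    ring
  have key : ∀ i ≤ r, Real.sqrt (∑ m ∈ (S i).erase j, x m ^ 2) ≤
      |x j| * (δ i) ^ 2 / (16 * C' * (B i) ^ 2) := by
    intro i hi
    induction i with
    | zero => rw [hS0]; exact hbase
    | succ k ih =>
      have hk : k < r := hi
      obtain ⟨_, h2, _⟩ := hstep k hk
      have ihk := ih (le_of_lt hk)
      calc Real.sqrt (∑ m ∈ (S (k+1)).erase j, x m ^ 2)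
          ≤ Real.sqrt (∑ m ∈ (S k).erase j, x m ^ 2) / (4 * B k) := h2
        _ ≤ (|x j| * (δ k) ^ 2 / (16 * C' * (B k) ^ 2)) / (4 * B k) := by
            have hb := hBpos k
            exact (div_le_div_iff_of_pos_right (by positivity)).mpr ihk
        _ = |x j| * (δ (k+1)) ^ 2 / (16 * C' * (B (k+1)) ^ 2) := by
            have hbk := hBpos k
            rw [hBsq, hδsq, div_div, div_eq_div_iff (by positivity) (by positivity)]
            ring
  refine ⟨key, ?_⟩
  intro hnB
  obtain ⟨m, rfl⟩ : ∃ m, r = m + 1 := ⟨r - 1, (Nat.succ_pred_eq_of_pos hr).symm⟩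
  obtain ⟨hj, _, h3⟩ := hstep m (lt_add_one m)
  have hcard : ((S m).card : ℝ) ≤ n := by
    exact_mod_cast (Finset.card_le_univ _).trans_eq (by simp)
  have hBm : (n : ℝ) ≤ B m ^ 2 := by
    refine hnB.trans ?_
    rw [hB, hB, ← Real.rpow_natCast ((2:ℝ) ^ ((3/2:ℝ) ^ m)) 2,
        ← Real.rpow_mul (by norm_num)]
    apply Real.rpow_le_rpow_of_exponent_le one_le_two
    have : (0:ℝ) ≤ (3/2:ℝ) ^ m := by positivity
    push_cast
    rw [pow_succ]
    nlinarith
  have hnpos : (0:ℝ) < n := by positivity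
  have hlt : ((S (m+1)).card : ℝ) < 2 := by
    have h4 : ((S m).card : ℝ) / (16 * B m ^ 2) ≤ (n : ℝ) / (16 * (n:ℝ)) :=
      div_le_div₀ hnpos.le hcard (by linarith) (by linarith)
    have : (n:ℝ) / (16 * (n:ℝ)) = 1/16 := by
      field_simp
    linarith
  have hc1 : (S (m+1)).card ≤ 1 := by
    have : (S (m+1)).card < 2 := by exact_mod_cast hlt
    omega
  exact Finset.eq_singleton_iff_unique_mem.mpr
    ⟨hj, fun y hy => Finset.card_le_one.mp hc1 y hy j hj⟩
end

section
/- Let k ≥ 1 be an integer, C ≥ 1, and p = 1/(4C²k). Let x ∈ ℝⁿ, let S ⊆ {1,…,n} with |S| = k, and let j ∈ S satisfy x_j² ≥ (1/k)·‖x restricted to {1,…,n}∖S‖₂². Let T be a random subset of {1,…,n} that contains each element independently with probability p. Then with probability at least p/(2e), all of the following hold: T ∩ S = {j}; ‖x restricted to T∖{j}‖₂ ≤ |x_j|/C; and |T| ≤ 1 + n/k. -/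
open MeasureTheory ProbabilityTheory

lemma markov_aux {Ω : Type*} [MeasurableSpace Ω] (P : Measure Ω) [IsProbabilityMeasure P]
    {n : ℕ} (s : Finset (Fin n)) (A : Fin n → Set Ω) (hA : ∀ i, MeasurableSet (A i))
    (w : Fin n → ℝ) (hw : ∀ i, 0 ≤ w i) (q : ℝ) (hq : 0 ≤ q)
    (hP : ∀ i, P (A i) = ENNReal.ofReal q)
    (t : ℝ) (ht : 0 < t) (hsum : q * ∑ i ∈ s, w i ≤ t / 4) :
    P {ω | ¬ (∑ i ∈ s, (A i).indicator (fun _ => w i) ω) ≤ t} ≤ ENNReal.ofReal (1/4) := by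
  set g : Ω → ENNReal := fun ω => ∑ i ∈ s, (A i).indicator (fun _ => ENNReal.ofReal (w i)) ω
    with hg_def
  have hg : Measurable g := Finset.measurable_sum _ fun i _ => measurable_const.indicator (hA i)
  have hgY : ∀ ω, g ω = ENNReal.ofReal (∑ i ∈ s, (A i).indicator (fun _ => w i) ω) := by
    intro ω
    rw [ENNReal.ofReal_sum_of_nonneg (fun i _ => Set.indicator_apply_nonneg (f := fun _ => w i) fun _ => hw i)]
    refine Finset.sum_congr rfl fun i _ => ?_
    by_cases h : ω ∈ A i <;> simp [Set.indicator_apply, h]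
  have hsub : {ω | ¬ (∑ i ∈ s, (A i).indicator (fun _ => w i) ω) ≤ t}
      ⊆ {ω | ENNReal.ofReal t ≤ g ω} := by
    intro ω hω
    simp only [Set.mem_setOf_eq, not_le] at hω ⊢
    rw [hgY]
    exact ENNReal.ofReal_le_ofReal hω.le
  have hlint : ∫⁻ ω, g ω ∂P = ENNReal.ofReal (q * ∑ i ∈ s, w i) := by
    rw [hg_def]
    rw [lintegral_finset_sum _ fun i _ => measurable_const.indicator (hA i)]
    have h1 : ∀ i ∈ s, ∫⁻ ω, (A i).indicator (fun _ => ENNReal.ofReal (w i)) ω ∂P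
        = ENNReal.ofReal (w i * q) := by
      intro i _
      rw [lintegral_indicator_const (hA i), hP i, ← ENNReal.ofReal_mul (hw i)]
    rw [Finset.sum_congr rfl h1, ← ENNReal.ofReal_sum_of_nonneg
      (fun i _ => mul_nonneg (hw i) hq), Finset.mul_sum]
    congr 1
    exact Finset.sum_congr rfl fun i _ => mul_comm _ _
  calc P {ω | ¬ (∑ i ∈ s, (A i).indicator (fun _ => w i) ω) ≤ t}
      ≤ P {ω | ENNReal.ofReal t ≤ g ω} := measure_mono hsub
    _ ≤ (∫⁻ ω, g ω ∂P) / ENNReal.ofReal t :=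
        meas_ge_le_lintegral_div hg.aemeasurable (by simpa using ht) ENNReal.ofReal_ne_top
    _ ≤ ENNReal.ofReal (t/4) / ENNReal.ofReal t := by
        rw [hlint]
        exact ENNReal.div_le_div_right (ENNReal.ofReal_le_ofReal hsum) _
    _ = ENNReal.ofReal (1/4) := by
        rw [← ENNReal.ofReal_div_of_pos ht]
        congr 1
        field_simp

set_option maxHeartbeats 1200000 in
/-- Subsampling core of the reduction from k-sparse to 1-sparse recovery: after
subsampling at rate p = 1/(4C²k), a fixed (1/k)-heavy hitter j is, with probability
at least p/(2e), isolated from the other top-k coordinates and dominates. -/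
theorem stmt9 {Ω : Type*} [MeasurableSpace Ω] (P : Measure Ω) [IsProbabilityMeasure P]
    (n k : ℕ) (hk : 1 ≤ k) (C : ℝ) (hC : 1 ≤ C) (p : ℝ) (hp : p = 1 / (4 * C ^ 2 * k))
    (x : Fin n → ℝ) (S : Finset (Fin n)) (hScard : S.card = k)
    (j : Fin n) (hj : j ∈ S)
    (hheavy : x j ^ 2 ≥ (1 / (k : ℝ)) * ∑ i ∈ Sᶜ, x i ^ 2)
    (T : Ω → Finset (Fin n))
    (hmeas : ∀ i, MeasurableSet {ω | i ∈ T ω})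
    (hber : ∀ i, P {ω | i ∈ T ω} = ENNReal.ofReal p)
    (hindep : iIndepSet (fun i : Fin n => {ω | i ∈ T ω}) P) :
    ENNReal.ofReal (p / (2 * Real.exp 1)) ≤
      P {ω | T ω ∩ S = {j} ∧
        Real.sqrt (∑ i ∈ (T ω).erase j, x i ^ 2) ≤ |x j| / C ∧
        ((T ω).card : ℝ) ≤ 1 + (n : ℝ) / k} := by
  classical
  set A : Fin n → Set Ω := fun i => {ω | i ∈ T ω} with hA_def
  -- basic numerics
  have hk' : (1:ℝ) ≤ (k:ℝ) := by exact_mod_cast hk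
  have hkpos : (0:ℝ) < (k:ℝ) := by linarith
  have hC0 : (0:ℝ) < C := by linarith
  have hCsq : (1:ℝ) ≤ C ^ 2 := by nlinarith
  have hden : (0:ℝ) < 4 * C ^ 2 * (k:ℝ) := by nlinarith
  have hp0 : 0 < p := by rw [hp]; positivity
  have hp4 : p ≤ 1/4 := by
    rw [hp, div_le_div_iff₀ hden (by norm_num)]
    nlinarith
  have hpk : p * (k:ℝ) = 1 / (4 * C ^ 2) := by
    rw [hp]; field_simp
  have hkn : k ≤ n := by
    have := Finset.card_le_univ S
    simpa [hScard] using this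
  have hn1 : 1 ≤ n := le_trans hk hkn
  have hn' : (0:ℝ) < (n:ℝ) := by exact_mod_cast Nat.lt_of_lt_of_le Nat.zero_lt_one hn1
  have hsumx : ∑ i ∈ Sᶜ, x i ^ 2 ≤ (k:ℝ) * x j ^ 2 := by
    have h := hheavy
    rw [ge_iff_le, div_mul_eq_mul_div, one_mul, div_le_iff₀ hkpos] at h
    linarith [h]
  -- the events
  set Y : Ω → ℝ := fun ω => ∑ i ∈ Sᶜ, (A i).indicator (fun _ => x i ^ 2) ω with hY_def
  set N : Ω → ℝ := fun ω => ∑ i ∈ Sᶜ, (A i).indicator (fun _ => (1:ℝ)) ω with hN_def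
  set E : Set Ω := {ω | j ∈ T ω ∧ ∀ i ∈ S.erase j, i ∉ T ω} with hE_def
  set F : Set Ω := {ω | Y ω ≤ x j ^ 2 / C ^ 2 ∧ N ω ≤ (n:ℝ) / (k:ℝ)} with hF_def
  -- Step A : E ∩ F is contained in the target event
  have hstepA : E ∩ F ⊆ {ω | T ω ∩ S = {j} ∧
      Real.sqrt (∑ i ∈ (T ω).erase j, x i ^ 2) ≤ |x j| / C ∧
      ((T ω).card : ℝ) ≤ 1 + (n : ℝ) / k} := by
    rintro ω ⟨⟨hjT, hrest⟩, hYω, hNω⟩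
    have hsubC : (T ω).erase j ⊆ Sᶜ := by
      intro i hi
      rw [Finset.mem_erase] at hi
      rw [Finset.mem_compl]
      intro hiS
      exact hrest i (Finset.mem_erase.2 ⟨hi.1, hiS⟩) hi.2
    have hsum_le : ∑ i ∈ (T ω).erase j, x i ^ 2 ≤ Y ω := by
      have heq : ∑ i ∈ (T ω).erase j, x i ^ 2
          = ∑ i ∈ (T ω).erase j, (A i).indicator (fun _ => x i ^ 2) ω := by
        refine Finset.sum_congr rfl fun i hi => ?_
        have : ω ∈ A i := Finset.mem_of_mem_erase hi
        simp [Set.indicator_apply, this]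
      rw [heq, hY_def]
      exact Finset.sum_le_sum_of_subset_of_nonneg hsubC
        (fun i _ _ => Set.indicator_apply_nonneg (f := fun _ => x i ^ 2) fun _ => sq_nonneg _)
    have hcard_le : (((T ω).erase j).card : ℝ) ≤ N ω := by
      have heq : (((T ω).erase j).card : ℝ)
          = ∑ i ∈ (T ω).erase j, (A i).indicator (fun _ => (1:ℝ)) ω := by
        rw [Finset.card_eq_sum_ones]
        push_cast
        refine Finset.sum_congr rfl fun i hi => ?_
        have : ω ∈ A i := Finset.mem_of_mem_erase hi
        simp [Set.indicator_apply, this]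
      rw [heq, hN_def]
      exact Finset.sum_le_sum_of_subset_of_nonneg hsubC
        (fun i _ _ => Set.indicator_apply_nonneg (f := fun _ => (1:ℝ)) fun _ => one_pos.le)
    refine ⟨?_, ?_, ?_⟩
    · ext i
      simp only [Finset.mem_inter, Finset.mem_singleton]
      constructor
      · rintro ⟨hiT, hiS⟩
        by_contra hne
        exact hrest i (Finset.mem_erase.2 ⟨hne, hiS⟩) hiT
      · rintro rfl
        exact ⟨hjT, hj⟩
    · have h1 : Real.sqrt (∑ i ∈ (T ω).erase j, x i ^ 2) ≤ Real.sqrt (x j ^ 2 / C ^ 2) :=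
        Real.sqrt_le_sqrt (le_trans hsum_le hYω)
      have h2 : Real.sqrt (x j ^ 2 / C ^ 2) = |x j| / C := by
        rw [show x j ^ 2 / C ^ 2 = (|x j| / C) ^ 2 by rw [div_pow, sq_abs]]
        exact Real.sqrt_sq (by positivity)
      rw [h2] at h1
      exact h1
    · have h3 : ((T ω).erase j).card + 1 = (T ω).card := Finset.card_erase_add_one hjT
      have h4 : ((T ω).card : ℝ) = (((T ω).erase j).card : ℝ) + 1 := by
        rw [← h3]; push_cast; ring
      rw [h4]
      linarith [le_trans hcard_le hNω]
  -- measurability infrastructure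
  set M : Fin n → MeasurableSpace Ω := fun i => MeasurableSpace.generateFrom {A i} with hM_def
  have hM_le : ∀ i, M i ≤ ‹MeasurableSpace Ω› := by
    intro i
    apply MeasurableSpace.generateFrom_le
    rintro t ht
    rw [Set.mem_singleton_iff] at ht
    subst ht
    exact hmeas i
  have hAi_m : ∀ i, MeasurableSet[M i] (A i) :=
    fun i => MeasurableSpace.measurableSet_generateFrom (Set.mem_singleton _)
  have hindep' : iIndep M P := (iIndepSet_iff_iIndep _ _).1 hindep
  -- Step C : P E = p (1-p)^(k-1)
  set f : Fin n → Set Ω := fun i => if i = j then A j else (A i)ᶜ with hf_def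
  have hf_m : ∀ i ∈ S, MeasurableSet[M i] (f i) := by
    intro i _
    by_cases h : i = j
    · subst h; simpa [hf_def] using hAi_m i
    · simpa [hf_def, h] using (hAi_m i).compl
  have hE_eq : E = ⋂ i ∈ S, f i := by
    ext ω
    simp only [hE_def, Set.mem_setOf_eq, Set.mem_iInter]
    constructor
    · rintro ⟨h1, h2⟩ i hi
      by_cases h : i = j
      · subst h; simpa [hf_def, hA_def] using h1
      · simp only [hf_def, if_neg h, Set.mem_compl_iff, hA_def, Set.mem_setOf_eq]
        exact h2 i (Finset.mem_erase.2 ⟨h, hi⟩)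
    · intro h
      refine ⟨by simpa [hf_def, hA_def] using h j hj, fun i hi hiT => ?_⟩
      rw [Finset.mem_erase] at hi
      have := h i hi.2
      simp only [hf_def, if_neg hi.1, Set.mem_compl_iff, hA_def, Set.mem_setOf_eq] at this
      exact this hiT
  have hPE : P E = ENNReal.ofReal p * (ENNReal.ofReal (1 - p)) ^ (k - 1) := by
    rw [hE_eq, hindep'.meas_biInter hf_m]
    rw [← Finset.mul_prod_erase S _ hj]
    have h1 : P (f j) = ENNReal.ofReal p := by
      simp only [hf_def, if_pos rfl]
      exact hber j
    have h2 : ∀ i ∈ S.erase j, P (f i) = ENNReal.ofReal (1 - p) := by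
      intro i hi
      rw [Finset.mem_erase] at hi
      simp only [hf_def, if_neg hi.1]
      rw [measure_compl (hmeas i) (measure_ne_top _ _), hber i]
      rw [ENNReal.ofReal_sub _ hp0.le, ENNReal.ofReal_one, measure_univ]
    rw [h1, Finset.prod_congr rfl h2, Finset.prod_const, Finset.card_erase_of_mem hj, hScard]
  -- Step B : independence of E and F
  have hIndep2 : Indep (⨆ i ∈ (↑S : Set (Fin n)), M i) (⨆ i ∈ (↑S : Set (Fin n))ᶜ, M i) P :=
    indep_iSup_of_disjoint hM_le hindep' disjoint_compl_right
  have hE_m : MeasurableSet[⨆ i ∈ (↑S : Set (Fin n)), M i] E := by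
    rw [hE_eq]
    refine MeasurableSet.biInter S.countable_toSet fun i hi => ?_
    exact (le_biSup M (Finset.mem_coe.2 hi)) _ (hf_m i hi)
  have hAi_m2 : ∀ i ∈ Sᶜ, MeasurableSet[⨆ i ∈ (↑S : Set (Fin n))ᶜ, M i] (A i) := by
    intro i hi
    have hmem : i ∈ (↑S : Set (Fin n))ᶜ := by
      simpa using Finset.mem_compl.1 hi
    exact (le_biSup M hmem) _ (hAi_m i)
  have hY_m : Measurable[⨆ i ∈ (↑S : Set (Fin n))ᶜ, M i] Y :=
    Finset.measurable_sum _ fun i hi => Measurable.indicator measurable_const (hAi_m2 i hi)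
  have hN_m : Measurable[⨆ i ∈ (↑S : Set (Fin n))ᶜ, M i] N :=
    Finset.measurable_sum _ fun i hi => Measurable.indicator measurable_const (hAi_m2 i hi)
  have hF_m : MeasurableSet[⨆ i ∈ (↑S : Set (Fin n))ᶜ, M i] F := by
    exact (measurableSet_le hY_m measurable_const).inter (measurableSet_le hN_m measurable_const)
  have hPEF : P (E ∩ F) = P E * P F :=
    (Indep_iff _ _ _).1 hIndep2 E F hE_m hF_m
  -- Step D : P F ≥ 1/2
  have hF_meas : MeasurableSet F := by
    have : (⨆ i ∈ (↑S : Set (Fin n))ᶜ, M i) ≤ ‹MeasurableSpace Ω› :=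
      iSup₂_le fun i _ => hM_le i
    exact this _ hF_m
  have hYbad : P {ω | ¬ Y ω ≤ x j ^ 2 / C ^ 2} ≤ ENNReal.ofReal (1/4) := by
    by_cases hxj : x j = 0
    · have hzero : ∀ i ∈ Sᶜ, x i ^ 2 = 0 := by
        have hs0 : ∑ i ∈ Sᶜ, x i ^ 2 ≤ 0 := by
          have := hsumx
          rw [hxj] at this
          simpa using this
        intro i hi
        have h1 : (0:ℝ) ≤ ∑ i ∈ Sᶜ, x i ^ 2 :=
          Finset.sum_nonneg fun i _ => sq_nonneg _
        have h2 : ∑ i ∈ Sᶜ, x i ^ 2 = 0 := le_antisymm hs0 h1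
        have := (Finset.sum_eq_zero_iff_of_nonneg fun i _ => sq_nonneg (x i)).1 h2
        exact this i hi
      have : {ω | ¬ Y ω ≤ x j ^ 2 / C ^ 2} = ∅ := by
        ext ω
        simp only [Set.mem_setOf_eq, Set.mem_empty_iff_false, iff_false, not_not]
        have : Y ω = 0 := by
          rw [hY_def]
          refine Finset.sum_eq_zero fun i hi => ?_
          simp [Set.indicator_apply, hzero i hi]
        rw [this, hxj]
        positivity
      rw [this]
      simp
    · have hc : 0 < x j ^ 2 / C ^ 2 := by positivity
      refine markov_aux P Sᶜ A hmeas (fun i => x i ^ 2) (fun i => sq_nonneg _) p hp0.le hber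
        _ hc ?_
      calc p * ∑ i ∈ Sᶜ, x i ^ 2 ≤ p * ((k:ℝ) * x j ^ 2) :=
            mul_le_mul_of_nonneg_left hsumx hp0.le
        _ = (p * (k:ℝ)) * x j ^ 2 := by ring
        _ = 1 / (4 * C ^ 2) * x j ^ 2 := by rw [hpk]
        _ = (x j ^ 2 / C ^ 2) / 4 := by field_simp
  have hNbad : P {ω | ¬ N ω ≤ (n:ℝ) / (k:ℝ)} ≤ ENNReal.ofReal (1/4) := by
    have hd : (0:ℝ) < (n:ℝ) / (k:ℝ) := by positivity
    refine markov_aux P Sᶜ A hmeas (fun _ => (1:ℝ)) (fun _ => one_pos.le) p hp0.le hber _ hd ?_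
    have hcard : ((Sᶜ : Finset (Fin n)).card : ℝ) ≤ (n:ℝ) := by
      have := Finset.card_le_univ (Sᶜ : Finset (Fin n))
      have h2 : ((Sᶜ : Finset (Fin n)).card : ℕ) ≤ n := by simpa using this
      exact_mod_cast h2
    rw [Finset.sum_const, nsmul_eq_mul, mul_one]
    have h5 : p * ((Sᶜ : Finset (Fin n)).card : ℝ) ≤ p * (n:ℝ) := by
      exact mul_le_mul_of_nonneg_left hcard hp0.le
    have h6 : p * (n:ℝ) ≤ (n:ℝ) / (k:ℝ) / 4 := by
      rw [hp, div_mul_eq_mul_div, one_mul, div_div, div_le_div_iff₀ hden (by positivity)]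
      nlinarith [mul_nonneg (mul_nonneg hn'.le hkpos.le) (sub_nonneg.2 hCsq)]
    linarith
  have hPF : ENNReal.ofReal (1/2) ≤ P F := by
    have hFc : P Fᶜ ≤ ENNReal.ofReal (1/2) := by
      have hsub : Fᶜ ⊆ {ω | ¬ Y ω ≤ x j ^ 2 / C ^ 2} ∪ {ω | ¬ N ω ≤ (n:ℝ) / (k:ℝ)} := by
        intro ω hω
        simp only [hF_def, Set.mem_compl_iff, Set.mem_setOf_eq, not_and_or] at hω
        exact hω
      calc P Fᶜ ≤ P ({ω | ¬ Y ω ≤ x j ^ 2 / C ^ 2} ∪ {ω | ¬ N ω ≤ (n:ℝ) / (k:ℝ)}) :=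
            measure_mono hsub
        _ ≤ P {ω | ¬ Y ω ≤ x j ^ 2 / C ^ 2} + P {ω | ¬ N ω ≤ (n:ℝ) / (k:ℝ)} :=
            measure_union_le _ _
        _ ≤ ENNReal.ofReal (1/4) + ENNReal.ofReal (1/4) := add_le_add hYbad hNbad
        _ = ENNReal.ofReal (1/2) := by
            rw [← ENNReal.ofReal_add (by norm_num) (by norm_num)]
            norm_num
    have hsplit : P F + P Fᶜ = 1 := by
      rw [measure_add_measure_compl hF_meas]
      exact measure_univ
    have h1 : (1:ENNReal) ≤ P F + ENNReal.ofReal (1/2) := by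
      rw [← hsplit]
      exact add_le_add le_rfl hFc
    calc ENNReal.ofReal (1/2) = 1 - ENNReal.ofReal (1/2) := by
          rw [← ENNReal.ofReal_one, ← ENNReal.ofReal_sub _ (by norm_num)]
          norm_num
      _ ≤ P F := tsub_le_iff_right.2 h1
  -- Step E : combine
  have h1p : (0:ℝ) ≤ 1 - p := by linarith
  have hexp : Real.exp (-1) ≤ (1 - p) ^ (k - 1) := by
    have hstep : Real.exp (-(2*p)) ≤ 1 - p := by
      have he1 : (1:ℝ) + 2*p ≤ Real.exp (2*p) := by
        linarith [Real.add_one_le_exp (2*p)]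
      have he2 : Real.exp (-(2*p)) = 1 / Real.exp (2*p) := by
        rw [Real.exp_neg]; rw [one_div]
      rw [he2]
      have hpos : (0:ℝ) < 1 + 2*p := by linarith
      calc 1 / Real.exp (2*p) ≤ 1 / (1 + 2*p) := by
            apply one_div_le_one_div_of_le hpos he1
        _ ≤ 1 - p := by
            rw [div_le_iff₀ hpos]
            nlinarith [mul_nonneg hp0.le (by linarith : (0:ℝ) ≤ 1 - 2*p)]
    calc Real.exp (-1) ≤ Real.exp (-(2*p) * (k-1 : ℕ)) := by
          apply Real.exp_le_exp.2
          have hcast : ((k-1 : ℕ):ℝ) = (k:ℝ) - 1 := by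
            have : (1:ℕ) ≤ k := hk
            push_cast [Nat.cast_sub this]
            ring
          rw [hcast]
          have hppk : p * (k:ℝ) ≤ 1/4 := by
            rw [hpk, div_le_div_iff₀ (by positivity) (by norm_num)]
            linarith
          nlinarith [hppk, hp0]
      _ = (Real.exp (-(2*p))) ^ (k-1) := by
          rw [mul_comm, Real.exp_nat_mul]
      _ ≤ (1 - p) ^ (k-1) := pow_le_pow_left₀ (Real.exp_nonneg _) hstep _
  have hreal : p / (2 * Real.exp 1) ≤ p * (1 - p) ^ (k - 1) * (1/2) := by
    have hepos : (0:ℝ) < Real.exp 1 := Real.exp_pos 1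
    have hinv : (Real.exp 1)⁻¹ ≤ (1 - p) ^ (k - 1) := by
      rw [← Real.exp_neg]
      exact hexp
    have hqe : (1:ℝ) ≤ (1 - p) ^ (k - 1) * Real.exp 1 := by
      calc (1:ℝ) = (Real.exp 1)⁻¹ * Real.exp 1 := (inv_mul_cancel₀ hepos.ne').symm
        _ ≤ (1 - p) ^ (k - 1) * Real.exp 1 :=
            mul_le_mul_of_nonneg_right hinv hepos.le
    rw [div_le_iff₀ (by positivity)]
    calc p = p * 1 := (mul_one p).symm
      _ ≤ p * ((1 - p) ^ (k - 1) * Real.exp 1) := mul_le_mul_of_nonneg_left hqe hp0.le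
      _ = p * (1 - p) ^ (k - 1) * (1/2) * (2 * Real.exp 1) := by ring
  calc ENNReal.ofReal (p / (2 * Real.exp 1))
      ≤ ENNReal.ofReal (p * (1 - p) ^ (k - 1) * (1/2)) := ENNReal.ofReal_le_ofReal hreal
    _ = ENNReal.ofReal p * (ENNReal.ofReal (1 - p)) ^ (k-1) * ENNReal.ofReal (1/2) := by
        rw [ENNReal.ofReal_mul (by positivity), ENNReal.ofReal_mul hp0.le,
          ENNReal.ofReal_pow h1p]
    _ ≤ P E * P F := by
        rw [hPE]
        exact mul_le_mul' le_rfl hPF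
    _ = P (E ∩ F) := hPEF.symm
    _ ≤ P {ω | T ω ∩ S = {j} ∧
        Real.sqrt (∑ i ∈ (T ω).erase j, x i ^ 2) ≤ |x j| / C ∧
        ((T ω).card : ℝ) ≤ 1 + (n : ℝ) / k} := measure_mono hstepA
end

section
/- Let x ∈ ℝⁿ, let k ≥ 1 be an integer and ε > 0. Let H be a set of k indices maximizing ‖x restricted to H‖₂ over all sets of size k, and let H' = {j ∈ H : x_j² ≥ (ε/k)·‖x restricted to the complement of H‖₂²}. Let m ≥ 0 be an integer and let T ⊆ {1,…,n} satisfy |H' ∖ T| ≤ m. Let y = x restricted to the complement of T. Then err(y, m) ≤ (1+ε)·err(x, k), where err(v, s) = min over sets S of size s of ‖v restricted to the complement of S‖₂². -/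
/-- `errN n v s` is the best s-sparse approximation error of v:
the minimum over sets S of at most s coordinates of ‖v restricted to Sᶜ‖₂². -/
noncomputable def errN (n : ℕ) (v : Fin n → ℝ) (s : ℕ) : ℝ :=
  sInf {e : ℝ | ∃ S : Finset (Fin n), S.card ≤ s ∧ e = ∑ i ∈ Sᶜ, v i ^ 2}

lemma errN_bddBelow (n : ℕ) (v : Fin n → ℝ) (s : ℕ) :
    BddBelow {e : ℝ | ∃ S : Finset (Fin n), S.card ≤ s ∧ e = ∑ i ∈ Sᶜ, v i ^ 2} := by
  refine ⟨0, ?_⟩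
  rintro e ⟨S, -, rfl⟩
  exact Finset.sum_nonneg fun i _ => sq_nonneg _

lemma errN_le (n : ℕ) (v : Fin n → ℝ) (s : ℕ) (S : Finset (Fin n)) (hS : S.card ≤ s) :
    errN n v s ≤ ∑ i ∈ Sᶜ, v i ^ 2 :=
  csInf_le (errN_bddBelow n v s) ⟨S, hS, rfl⟩

/-- The deterministic part of the recursion lemma: if all but m of the ε/k-heavy
hitters have been captured in T, then removing T leaves a vector whose best
m-sparse approximation error is at most (1+ε) times the best k-sparse error. -/
theorem stmt10 (n k : ℕ) (hk : 1 ≤ k) (ε : ℝ) (hε : 0 < ε) (x : Fin n → ℝ)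
    (H : Finset (Fin n)) (hHcard : H.card = k)
    (hHmax : ∀ S : Finset (Fin n), S.card = k → ∑ i ∈ S, x i ^ 2 ≤ ∑ i ∈ H, x i ^ 2)
    (H' : Finset (Fin n))
    (hH' : ∀ i, i ∈ H' ↔ i ∈ H ∧ (ε / k) * ∑ i' ∈ Hᶜ, x i' ^ 2 ≤ x i ^ 2)
    (m : ℕ) (T : Finset (Fin n)) (hT : (H' \ T).card ≤ m)
    (y : Fin n → ℝ) (hy : y = fun i => if i ∈ T then 0 else x i) :
    errN n y m ≤ (1 + ε) * errN n x k := by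
  set C : ℝ := ∑ i ∈ Hᶜ, x i ^ 2 with hC
  have hC0 : 0 ≤ C := Finset.sum_nonneg fun i _ => sq_nonneg _
  -- errN n x k = C
  have hxk : errN n x k = C := by
    apply le_antisymm (errN_le n x k H (le_of_eq hHcard))
    refine le_csInf ⟨C, H, le_of_eq hHcard, rfl⟩ ?_
    rintro e ⟨S, hScard, rfl⟩
    have hkn : k ≤ n := by
      simpa [hHcard] using Finset.card_le_univ H
    obtain ⟨S', hSS', hS'card⟩ := Finset.exists_superset_card_eq hScard
      (by simpa using hkn)
    have h1 : ∑ i ∈ S'ᶜ, x i ^ 2 ≤ ∑ i ∈ Sᶜ, x i ^ 2 :=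
      Finset.sum_le_sum_of_subset_of_nonneg (Finset.compl_subset_compl.2 hSS')
        (fun i _ _ => sq_nonneg _)
    refine le_trans ?_ h1
    have h2 := hHmax S' hS'card
    have hA := Finset.sum_add_sum_compl S' fun i => x i ^ 2
    have hB := Finset.sum_add_sum_compl H fun i => x i ^ 2
    linarith
  rw [hxk]
  have hmain : errN n y m ≤ ∑ i ∈ (H' \ T)ᶜ, y i ^ 2 := errN_le n y m _ hT
  refine hmain.trans ?_
  set A := (H' \ T)ᶜ with hA
  set U := (H \ H') ∪ Hᶜ with hU
  have key : ∑ i ∈ A, y i ^ 2 ≤ ∑ i ∈ U, x i ^ 2 := by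
    rw [← Finset.sum_filter_add_sum_filter_not A (· ∈ U)]
    have h1 : ∑ i ∈ A.filter (· ∈ U), y i ^ 2 ≤ ∑ i ∈ U, x i ^ 2 := by
      calc ∑ i ∈ A.filter (· ∈ U), y i ^ 2
          ≤ ∑ i ∈ A.filter (· ∈ U), x i ^ 2 := by
            apply Finset.sum_le_sum
            intro i _
            rw [hy]
            by_cases hiT : i ∈ T <;> simp [hiT, sq_nonneg]
        _ ≤ ∑ i ∈ U, x i ^ 2 := by
            apply Finset.sum_le_sum_of_subset_of_nonneg
            · intro i hi
              exact (Finset.mem_filter.1 hi).2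
            · exact fun i _ _ => sq_nonneg _
    have h2 : ∑ i ∈ A.filter (fun i => ¬ i ∈ U), y i ^ 2 = 0 := by
      apply Finset.sum_eq_zero
      intro i hi
      obtain ⟨hiA, hiU⟩ := Finset.mem_filter.1 hi
      have hiH' : i ∈ H' ∧ i ∈ H := by
        by_contra h
        apply hiU
        rw [hU]
        simp only [Finset.mem_union, Finset.mem_sdiff, Finset.mem_compl]
        tauto
      have hiT : i ∈ T := by
        have := Finset.mem_compl.1 hiA
        rw [Finset.mem_sdiff] at this
        tauto
      rw [hy]; simp [hiT]
    linarith
  refine key.trans ?_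
  have hdisj : Disjoint (H \ H') Hᶜ := by
    apply Finset.disjoint_left.2
    intro i hi hi'
    exact (Finset.mem_compl.1 hi') (Finset.mem_sdiff.1 hi).1
  rw [hU, Finset.sum_union hdisj]
  have hsmall : ∑ i ∈ H \ H', x i ^ 2 ≤ ε * C := by
    have hk0 : (0:ℝ) < k := by exact_mod_cast hk
    have hterm : ∀ i ∈ H \ H', x i ^ 2 ≤ (ε / k) * C := by
      intro i hi
      obtain ⟨hiH, hiH'⟩ := Finset.mem_sdiff.1 hi
      by_contra h
      exact hiH' ((hH' i).2 ⟨hiH, le_of_not_ge h⟩)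
    calc ∑ i ∈ H \ H', x i ^ 2 ≤ (H \ H').card * ((ε / k) * C) := by
          simpa using Finset.sum_le_card_nsmul _ _ _ hterm
      _ ≤ k * ((ε / k) * C) := by
          apply mul_le_mul_of_nonneg_right
          · have : (H \ H').card ≤ H.card := Finset.card_le_card (Finset.sdiff_subset)
            exact_mod_cast hHcard ▸ this
          · positivity
      _ = ε * C := by field_simp
  linarith
end

section
/- Define a sequence of reals by f₀ = 1/32 and f_{i+1} = 2^{−1/(4^{i+1} f_i)} for i ≥ 0. Then f_i ≤ 16^{−(i+1)} for every i ≥ 0, and Σ_{i=0}^∞ 2^i·(i+1)·√(f_i) ≤ 1. -/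
/-- The sparsity schedule f₀ = 1/32, f_{i+1} = 2^{-1/(4^{i+1} f_i)} decays at least
as fast as 16^{-(i+1)}, and the measurement-count series Σ 2^i (i+1) √f_i is at most 1. -/
theorem stmt14 (f : ℕ → ℝ) (h0 : f 0 = 1 / 32)
    (hs : ∀ i : ℕ, f (i + 1) = (2 : ℝ) ^ (-(1 / ((4 : ℝ) ^ (i + 1) * f i)))) :
    (∀ i : ℕ, f i ≤ 1 / 16 ^ (i + 1)) ∧
    ∑' i : ℕ, (2 : ℝ) ^ i * ((i : ℝ) + 1) * Real.sqrt (f i) ≤ 1 := by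
  have hpos : ∀ i, 0 < f i := by
    intro i
    cases i with
    | zero => rw [h0]; norm_num
    | succ n => rw [hs]; exact Real.rpow_pos_of_pos (by norm_num) _
  have hnat : ∀ m : ℕ, 4 * (m + 3) ≤ 4 ^ (m + 2) := by
    intro m
    induction m with
    | zero => norm_num
    | succ k ih =>
      have h4 : 4 ^ (k + 1 + 2) = 4 * 4 ^ (k + 2) := by ring
      omega
  have hb : ∀ i, f i ≤ 1 / 16 ^ (i + 1) := by
    intro i
    induction i with
    | zero => rw [h0]; norm_num
    | succ n ih =>
      cases n with
      | zero =>
        rw [hs 0, h0]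
        norm_num
      | succ m =>
        rw [hs (m + 1)]
        set a : ℝ := (4:ℝ) ^ (m + 2) with ha_def
        have ha : 0 < a := by positivity
        have h16 : (16:ℝ) ^ (m + 2) = a ^ 2 := by
          rw [ha_def, ← pow_mul, mul_comm, pow_mul]
          norm_num
        have hy : 0 < a * f (m + 1) := mul_pos ha (hpos _)
        have hy_le : a * f (m + 1) ≤ 1 / a := by
          have : a * f (m + 1) ≤ a * (1 / 16 ^ (m + 2)) :=
            mul_le_mul_of_nonneg_left ih ha.le
          calc a * f (m + 1) ≤ a * (1 / 16 ^ (m + 2)) := this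
            _ = 1 / a := by rw [h16]; field_simp
        have hinv : a ≤ 1 / (a * f (m + 1)) := by
          have := one_div_le_one_div_of_le hy hy_le
          rwa [one_div_one_div] at this
        have step1 : (2:ℝ) ^ (-(1 / ((4:ℝ) ^ (m + 1 + 1) * f (m + 1)))) ≤ (2:ℝ) ^ (-a) := by
          apply Real.rpow_le_rpow_of_exponent_le one_le_two
          simp only [neg_le_neg_iff]
          exact hinv
        have step2 : (2:ℝ) ^ (-a) ≤ (2:ℝ) ^ (-((4 * (m + 3) : ℕ) : ℝ)) := by
          apply Real.rpow_le_rpow_of_exponent_le one_le_two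
          rw [neg_le_neg_iff, ha_def]
          have := hnat m
          calc ((4 * (m + 3) : ℕ) : ℝ) ≤ ((4 ^ (m + 2) : ℕ) : ℝ) := by exact_mod_cast this
            _ = (4:ℝ) ^ (m + 2) := by push_cast; ring
        have step3 : (2:ℝ) ^ (-((4 * (m + 3) : ℕ) : ℝ)) = 1 / 16 ^ (m + 3) := by
          rw [Real.rpow_neg (by norm_num), Real.rpow_natCast]
          rw [show (2:ℝ) ^ (4 * (m + 3)) = 16 ^ (m + 3) by rw [pow_mul]; norm_num]
          rw [one_div]
        calc (2:ℝ) ^ (-(1 / ((4:ℝ) ^ (m + 1 + 1) * f (m + 1)))) ≤ (2:ℝ) ^ (-a) := step1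
          _ ≤ (2:ℝ) ^ (-((4 * (m + 3) : ℕ) : ℝ)) := step2
          _ = 1 / 16 ^ (m + 3) := step3
  refine ⟨hb, ?_⟩
  -- the series part
  have hsq : ∀ i : ℕ, Real.sqrt (f i) ≤ (1/4 : ℝ) ^ (i + 1) := by
    intro i
    have h1 : (1:ℝ) / 16 ^ (i + 1) = ((1/4 : ℝ) ^ (i + 1)) ^ 2 := by
      rw [← pow_mul, mul_comm, pow_mul]
      norm_num
      simp [one_div_pow, one_div]
    calc Real.sqrt (f i) ≤ Real.sqrt (1 / 16 ^ (i + 1)) := Real.sqrt_le_sqrt (hb i)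
      _ = (1/4 : ℝ) ^ (i + 1) := by rw [h1, Real.sqrt_sq (by positivity)]
  have hle : ∀ i : ℕ, (2:ℝ) ^ i * ((i:ℝ) + 1) * Real.sqrt (f i)
      ≤ ((i:ℝ) + 1) * (1/2:ℝ) ^ i * (1/4) := by
    intro i
    have hcomb : ((1:ℝ)/2) ^ i = 2 ^ i * (1/4) ^ i := by rw [← mul_pow]; norm_num
    calc (2:ℝ) ^ i * ((i:ℝ) + 1) * Real.sqrt (f i)
        ≤ (2:ℝ) ^ i * ((i:ℝ) + 1) * (1/4 : ℝ) ^ (i + 1) := by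
          apply mul_le_mul_of_nonneg_left (hsq i) (by positivity)
      _ = ((i:ℝ) + 1) * (1/2:ℝ) ^ i * (1/4) := by rw [pow_succ, hcomb]; ring
  have hnorm : ‖(1/2 : ℝ)‖ < 1 := by rw [Real.norm_eq_abs, abs_of_pos] <;> norm_num
  have h1 : Summable (fun i : ℕ => (i:ℝ) * (1/2) ^ i) := by
    simpa using summable_pow_mul_geometric_of_norm_lt_one 1 hnorm
  have h2 : Summable (fun i : ℕ => ((1:ℝ)/2) ^ i) :=
    summable_geometric_of_lt_one (by norm_num) (by norm_num)
  have hg : Summable (fun i : ℕ => ((i:ℝ) + 1) * (1/2:ℝ) ^ i * (1/4)) := by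
    apply Summable.mul_right
    simpa [add_mul] using h1.add h2
  have hnn : ∀ i : ℕ, 0 ≤ (2:ℝ) ^ i * ((i:ℝ) + 1) * Real.sqrt (f i) := by
    intro i; positivity
  have hf : Summable (fun i : ℕ => (2:ℝ) ^ i * ((i:ℝ) + 1) * Real.sqrt (f i)) :=
    Summable.of_nonneg_of_le hnn hle hg
  have htv : ∑' i : ℕ, ((i:ℝ) + 1) * (1/2:ℝ) ^ i * (1/4) = 1 := by
    rw [tsum_mul_right]
    have heq : (fun i : ℕ => ((i:ℝ) + 1) * (1/2:ℝ) ^ i)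
        = fun i : ℕ => (i:ℝ) * (1/2) ^ i + (1/2) ^ i := funext fun i => by ring
    rw [heq, Summable.tsum_add h1 h2, tsum_coe_mul_geometric_of_norm_lt_one hnorm,
      tsum_geometric_of_lt_one (by norm_num) (by norm_num)]
    norm_num
  calc ∑' i : ℕ, (2:ℝ) ^ i * ((i:ℝ) + 1) * Real.sqrt (f i)
      ≤ ∑' i : ℕ, ((i:ℝ) + 1) * (1/2:ℝ) ^ i * (1/4) := Summable.tsum_le_tsum hle hf hg
    _ = 1 := htv
end
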